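/- Let β ≥ 1 and let μ be a Borel probability measure on [0,1] × [0,1], with coordinates denoted (x, z). If ∫ σ_β(x − z) dμ ≥ 1/2, then ∫ z dμ ≤ (β/2) · (1 + exp(−β))/(1 − exp(−β)) · ∫ x dμ. -/

import Mathlib

open MeasureTheory

noncomputable def sigma (β t : ℝ) : ℝ := 1 / (1 + Real.exp (-(β * t)))

-- F(s) = s e^s + s + 2 - 2 e^s ≥ 0 for s ≥ 0
lemma Fnonneg (s : ℝ) (hs : 0 ≤ s) : 0 ≤ s * Real.exp s + s + 2 - 2 * Real.exp s := by
  set F : ℝ → ℝ := fun x => x * Real.exp x + x + 2 - 2 * Real.exp x with hF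
  have hder : ∀ x : ℝ, HasDerivAt F ((x - 1) * Real.exp x + 1) x := by
    intro x
    have h1 : HasDerivAt (fun x : ℝ => x * Real.exp x) (1 * Real.exp x + x * Real.exp x) x :=
      (hasDerivAt_id x).mul (Real.hasDerivAt_exp x)
    have h2 : HasDerivAt (fun x : ℝ => 2 * Real.exp x) (2 * Real.exp x) x :=
      (Real.hasDerivAt_exp x).const_mul 2
    have := ((h1.add (hasDerivAt_id x)).add_const 2).sub h2
    exact this.congr_deriv (by ring)
  have hmono : MonotoneOn F (Set.Ici 0) := by
    apply monotoneOn_of_deriv_nonneg (convex_Ici 0)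
    · exact (Continuous.continuousOn (by continuity))
    · intro x hx
      exact (hder x).differentiableAt.differentiableWithinAt
    · intro x hx
      rw [(hder x).deriv]
      rcases le_or_gt 1 x with h | h
      · nlinarith [Real.exp_pos x, (Real.exp_pos x).le]
      · have hx0 : 0 < x := by simpa using hx
        have : 1 - x ≤ Real.exp (-x) := by
          have := Real.add_one_le_exp (-x); linarith
        have hprod : (1 - x) * Real.exp x ≤ 1 := by
          have := mul_le_mul_of_nonneg_right this (Real.exp_pos x).le
          rwa [← Real.exp_add, neg_add_cancel, Real.exp_zero] at this
        nlinarith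
  have h0 : F 0 = 0 := by simp [hF]
  have := hmono (Set.self_mem_Ici) (Set.mem_Ici.mpr hs) hs
  rw [h0] at this
  exact this

-- tanh-type bound: for s ≥ 0, 2(1 - e^{-s}) ≤ s (1 + e^{-s})
lemma factA (s : ℝ) (hs : 0 ≤ s) :
    2 * (1 - Real.exp (-s)) ≤ s * (1 + Real.exp (-s)) := by
  have hF := Fnonneg s hs
  have hw : Real.exp (-s) * Real.exp s = 1 := by
    rw [← Real.exp_add]; simp
  nlinarith [Real.exp_pos (-s), mul_nonneg (Real.exp_pos (-s)).le hF]

noncomputable def gfun (β t : ℝ) : ℝ := -1 + 2 / (1 + Real.exp (-(β * t)))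

lemma gfun_eq (β t : ℝ) : gfun β t
    = (1 - Real.exp (-(β * t))) / (1 + Real.exp (-(β * t))) := by
  have h : (0:ℝ) < 1 + Real.exp (-(β * t)) := by positivity
  unfold gfun
  field_simp [gfun]
  ring

lemma one_sub_two_sigma (β t : ℝ) : 1 - 2 * sigma β t = - gfun β t := by
  have h : (0:ℝ) < 1 + Real.exp (-(β * t)) := by positivity
  unfold sigma gfun
  field_simp [sigma, gfun]
  ring

lemma gfun_le (β t : ℝ) (hβ : 0 < β) (ht : 0 ≤ t) : gfun β t ≤ β * t / 2 := by
  rw [gfun_eq]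
  have h : (0:ℝ) < 1 + Real.exp (-(β * t)) := by positivity
  rw [div_le_iff₀ h]
  have := factA (β * t) (by positivity)
  linarith

lemma gfun_odd (β t : ℝ) : gfun β (-t) = - gfun β t := by
  rw [gfun_eq, gfun_eq]
  have h1 : (0:ℝ) < 1 + Real.exp (-(β * t)) := by positivity
  have h2 : (0:ℝ) < 1 + Real.exp (-(β * -t)) := by positivity
  have hw : Real.exp (β * t) * Real.exp (-(β * t)) = 1 := by
    rw [← Real.exp_add]; simp
  field_simp
  nlinarith [hw]

-- derivative facts
lemma hasDeriv_g (β t : ℝ) :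
    HasDerivAt (gfun β)
      (2 * β * Real.exp (-(β * t)) / (1 + Real.exp (-(β * t)))^2) t := by
  have hu : HasDerivAt (fun t : ℝ => Real.exp (-(β * t)))
      (Real.exp (-(β * t)) * (-β)) t := by
    have h1 : HasDerivAt (fun t : ℝ => -(β * t)) (-β) t := by
      simpa using (hasDerivAt_id t).const_mul (-β)
    exact (Real.hasDerivAt_exp _).comp t h1
  have hden : HasDerivAt (fun t : ℝ => 1 + Real.exp (-(β * t)))
      (Real.exp (-(β * t)) * (-β)) t := hu.const_add 1
  have hne : (1:ℝ) + Real.exp (-(β * t)) ≠ 0 := by positivity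
  have hdiv := (hasDerivAt_const t (2:ℝ)).div hden hne
  have := hdiv.const_add (-1)
  exact this.congr_deriv (by ring)

lemma hasDeriv_g1 (β t : ℝ) :
    HasDerivAt (fun t => 2 * β * Real.exp (-(β * t)) / (1 + Real.exp (-(β * t)))^2)
      (-(2 * β^2) * Real.exp (-(β * t)) * (1 - Real.exp (-(β * t)))
        / (1 + Real.exp (-(β * t)))^3) t := by
  have hu : HasDerivAt (fun t : ℝ => Real.exp (-(β * t)))
      (Real.exp (-(β * t)) * (-β)) t := by
    have h1 : HasDerivAt (fun t : ℝ => -(β * t)) (-β) t := by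
      simpa using (hasDerivAt_id t).const_mul (-β)
    exact (Real.hasDerivAt_exp _).comp t h1
  have hN : HasDerivAt (fun t : ℝ => 2 * β * Real.exp (-(β * t)))
      (2 * β * (Real.exp (-(β * t)) * (-β))) t := hu.const_mul _
  have hden : HasDerivAt (fun t : ℝ => 1 + Real.exp (-(β * t)))
      (Real.exp (-(β * t)) * (-β)) t := hu.const_add 1
  have hD : HasDerivAt (fun t : ℝ => (1 + Real.exp (-(β * t)))^2)
      (2 * (1 + Real.exp (-(β * t)))^1 * (Real.exp (-(β * t)) * (-β))) t := by
    simpa using hden.fun_pow 2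
  have hne : ((1:ℝ) + Real.exp (-(β * t)))^2 ≠ 0 := by positivity
  have := hN.div hD hne
  have h : (0:ℝ) < 1 + Real.exp (-(β * t)) := by positivity
  exact this.congr_deriv (by field_simp; ring)

lemma gfun_concave (β : ℝ) (hβ : 0 < β) :
    ConcaveOn ℝ (Set.Icc (0:ℝ) 1) (gfun β) := by
  have hderiv : deriv (gfun β)
      = fun t => 2 * β * Real.exp (-(β * t)) / (1 + Real.exp (-(β * t)))^2 := by
    funext t; exact (hasDeriv_g β t).deriv
  apply concaveOn_of_deriv2_nonpos (convex_Icc 0 1)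
  · intro t _
    exact (hasDeriv_g β t).differentiableAt.continuousAt.continuousWithinAt
  · intro t _
    exact (hasDeriv_g β t).differentiableAt.differentiableWithinAt
  · intro t _
    rw [hderiv]
    exact (hasDeriv_g1 β t).differentiableAt.differentiableWithinAt
  · intro t ht
    have ht' : 0 < t := by
      rw [interior_Icc] at ht; exact ht.1
    have h2 : deriv^[2] (gfun β) t
        = -(2 * β^2) * Real.exp (-(β * t)) * (1 - Real.exp (-(β * t)))
          / (1 + Real.exp (-(β * t)))^3 := by
      rw [show (2:ℕ) = 1 + 1 from rfl, Function.iterate_succ_apply',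
        Function.iterate_one, hderiv]
      exact (hasDeriv_g1 β t).deriv
    rw [h2]
    have hu1 : Real.exp (-(β * t)) < 1 := by
      rw [Real.exp_lt_one_iff]
      nlinarith
    have hup : 0 < Real.exp (-(β * t)) := Real.exp_pos _
    have hdp : (0:ℝ) < (1 + Real.exp (-(β * t)))^3 := by positivity
    apply div_nonpos_of_nonpos_of_nonneg _ hdp.le
    have hprod : 0 < Real.exp (-(β * t)) * (1 - Real.exp (-(β * t))) :=
      mul_pos hup (by linarith)
    nlinarith [hprod]

lemma gfun_zero (β : ℝ) : gfun β 0 = 0 := by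
  simp [gfun]
  norm_num

lemma pointwise (β : ℝ) (hβ : 1 ≤ β) {x z : ℝ}
    (hx : x ∈ Set.Icc (0:ℝ) 1) (hz : z ∈ Set.Icc (0:ℝ) 1) :
    z - β / 2 * ((1 + Real.exp (-β)) / (1 - Real.exp (-β))) * x
      ≤ ((1 + Real.exp (-β)) / (1 - Real.exp (-β))) * (1 - 2 * sigma β (x - z)) := by
  have hβ0 : 0 < β := by linarith
  set v := Real.exp (-β) with hv
  have hv0 : 0 < v := Real.exp_pos _
  have hv1 : v < 1 := by
    rw [hv, Real.exp_lt_one_iff]; linarith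
  set K := (1 + v) / (1 - v) with hK
  have hKpos : 0 < K := by
    apply div_pos <;> linarith
  have hg1 : gfun β 1 = (1 - v) / (1 + v) := by
    rw [gfun_eq]; rw [mul_one]
  have hKg1 : K * gfun β 1 = 1 := by
    rw [hg1, hK, div_mul_div_comm, mul_comm (1 + v) (1 - v)]
    exact div_self (ne_of_gt (by nlinarith))
  have hg1le : gfun β 1 ≤ β / 2 := by
    have := gfun_le β 1 hβ0 zero_le_one
    linarith
  have hC1 : 1 ≤ β / 2 * K := by
    calc 1 = K * gfun β 1 := hKg1.symm
    _ ≤ K * (β / 2) := by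
        exact mul_le_mul_of_nonneg_left hg1le hKpos.le
    _ = β / 2 * K := by ring
  rw [one_sub_two_sigma]
  rcases le_or_gt z x with hzx | hzx
  · -- x ≥ z
    have hgle : gfun β (x - z) ≤ β * (x - z) / 2 := gfun_le β (x - z) hβ0 (by linarith)
    have h1 : K * (β * (x - z) / 2) = β / 2 * K * (x - z) := by ring
    have h2 : K * (-gfun β (x - z)) ≥ -(β / 2 * K * (x - z)) := by
      have h5 := mul_le_mul_of_nonneg_left hgle hKpos.le
      rw [h1] at h5
      linarith
    nlinarith [hz.1, mul_nonneg (by linarith : (0:ℝ) ≤ β / 2 * K - 1) hz.1]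
  · -- z > x
    have hodd : gfun β (x - z) = - gfun β (z - x) := by
      have := gfun_odd β (z - x)
      rw [show -(z - x) = x - z by ring] at this
      linarith
    have hmem1 : (1:ℝ) ∈ Set.Icc (0:ℝ) 1 := by norm_num
    have hmem0 : (0:ℝ) ∈ Set.Icc (0:ℝ) 1 := by norm_num
    have ht0 : 0 ≤ z - x := by linarith
    have ht1 : z - x ≤ 1 := by nlinarith [hz.2, hx.1]
    have hchord := (gfun_concave β hβ0).2 hmem1 hmem0 ht0
      (show (0:ℝ) ≤ 1 - (z - x) by linarith)
      (show (z - x) + (1 - (z - x)) = 1 by ring)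
    simp only [smul_eq_mul, mul_one, mul_zero, add_zero, gfun_zero] at hchord
    -- hchord : (z-x) * gfun β 1 ≤ gfun β (z - x)  (check form)
    have hKt : K * ((z - x) * gfun β 1) = z - x := by
      rw [show K * ((z - x) * gfun β 1) = (z - x) * (K * gfun β 1) by ring, hKg1]; ring
    have h3 : z - x ≤ K * gfun β (z - x) := by
      calc z - x = K * ((z - x) * gfun β 1) := hKt.symm
      _ ≤ K * gfun β (z - x) := mul_le_mul_of_nonneg_left hchord hKpos.le
    rw [hodd]
    have h4 : x ≤ β / 2 * K * x :=
      le_mul_of_one_le_left hx.1 hC1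
    simp only [neg_neg]
    linarith

theorem two_candidate_upper_bound (β : ℝ) (hβ : 1 ≤ β)
    (μ : Measure (ℝ × ℝ)) [IsProbabilityMeasure μ]
    (hsupp : ∀ᵐ p ∂μ, p.1 ∈ Set.Icc (0:ℝ) 1 ∧ p.2 ∈ Set.Icc (0:ℝ) 1)
    (hwin : (∫ p, sigma β (p.1 - p.2) ∂μ) ≥ 1/2) :
    (∫ p, p.2 ∂μ) ≤ (β/2) * ((1 + Real.exp (-β)) / (1 - Real.exp (-β))) * (∫ p, p.1 ∂μ) := by
  have hβ0 : 0 < β := by linarith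
  set v := Real.exp (-β) with hv
  have hv0 : 0 < v := Real.exp_pos _
  have hv1 : v < 1 := by rw [hv, Real.exp_lt_one_iff]; linarith
  set K := (1 + v) / (1 - v) with hK
  have hKpos : 0 < K := by apply div_pos <;> linarith
  set C := β / 2 * K with hC
  have hcont : Continuous (fun p : ℝ × ℝ => sigma β (p.1 - p.2)) := by
    unfold sigma
    exact continuous_const.div
      (by continuity) (fun p => by positivity)
  have hint1 : Integrable (fun p : ℝ × ℝ => p.1) μ := by
    apply Integrable.mono' (integrable_const (1:ℝ)) measurable_fst.aestronglyMeasurable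
    filter_upwards [hsupp] with p hp
    rw [Real.norm_eq_abs, abs_of_nonneg hp.1.1]; exact hp.1.2
  have hint2 : Integrable (fun p : ℝ × ℝ => p.2) μ := by
    apply Integrable.mono' (integrable_const (1:ℝ)) measurable_snd.aestronglyMeasurable
    filter_upwards [hsupp] with p hp
    rw [Real.norm_eq_abs, abs_of_nonneg hp.2.1]; exact hp.2.2
  have hintσ : Integrable (fun p : ℝ × ℝ => sigma β (p.1 - p.2)) μ := by
    apply Integrable.mono' (integrable_const (1:ℝ)) hcont.aestronglyMeasurable
    refine Filter.Eventually.of_forall fun p => ?_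
    have he : 0 < Real.exp (-(β * (p.1 - p.2))) := Real.exp_pos _
    rw [Real.norm_eq_abs, abs_of_pos (by unfold sigma; positivity)]
    unfold sigma
    rw [div_le_one (by positivity)]
    linarith
  have hintR : Integrable (fun p : ℝ × ℝ => K * (1 - 2 * sigma β (p.1 - p.2))) μ :=
    (((integrable_const (1:ℝ)).sub (hintσ.const_mul 2)).const_mul K)
  have hintL : Integrable (fun p : ℝ × ℝ => p.2 - C * p.1) μ :=
    hint2.sub (hint1.const_mul C)
  have key : (∫ p, (p.2 - C * p.1) ∂μ) ≤ ∫ p, K * (1 - 2 * sigma β (p.1 - p.2)) ∂μ := by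
    apply integral_mono_ae hintL hintR
    filter_upwards [hsupp] with p hp
    exact pointwise β hβ hp.1 hp.2
  rw [integral_sub hint2 (hint1.const_mul C), integral_const_mul] at key
  rw [integral_const_mul, integral_sub (integrable_const 1) (hintσ.const_mul 2),
    integral_const_mul, integral_const] at key
  simp only [probReal_univ, measure_univ, ENNReal.toReal_one, smul_eq_mul, one_mul] at key
  have hRle : K * (1 - 2 * ∫ p, sigma β (p.1 - p.2) ∂μ) ≤ 0 := by
    apply mul_nonpos_of_nonneg_of_nonpos hKpos.le
    linarith
  have : (∫ p, p.2 ∂μ) - C * ∫ p, p.1 ∂μ ≤ 0 := le_trans key hRle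
  linarith
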